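/- Let P ⊆ ℝ^n be a nonempty compact set with nonempty boundary ∂P, let V : ℝ^n → ℝ be continuous, let β = min_{y ∈ ∂P} V(y), and let P* = { y ∈ P : V(y) < β }. Let x : [0, ∞) → ℝ^n be continuous with x(0) ∈ P*, and suppose that for every t ≥ 0 with x(t) ∈ P, the function s ↦ V(x(s)) has a right derivative at t which is ≤ 0. Then x(t) ∈ P* for all t ≥ 0; that is, P* is positively invariant for the trajectory. -/

import Mathlib

open Set
open Topology Filter

/-- **Positive invariance of the inner sublevel region.** Let `P ⊆ ℝⁿ` be a
nonempty compact set with nonempty boundary, `V` continuous, `β` the minimum of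
`V` over `∂P`, and `P* = {y ∈ P | V y < β}`. If a continuous trajectory `x`
starts in `P*` and `V ∘ x` has a nonpositive right derivative wherever the
trajectory is in `P`, then the trajectory stays in `P*` forever. -/
theorem sublevel_region_positively_invariant
    (n : ℕ) (P : Set (Fin n → ℝ)) (hPc : IsCompact P) (hPne : P.Nonempty)
    (hfr : (frontier P).Nonempty)
    (V : (Fin n → ℝ) → ℝ) (hV : Continuous V)
    (β : ℝ) (hβ : IsLeast (V '' frontier P) β)
    (x : ℝ → (Fin n → ℝ)) (hx : ContinuousOn x (Ici 0))
    (hx0 : x 0 ∈ P ∩ {y | V y < β})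
    (hderiv : ∀ t : ℝ, 0 ≤ t → x t ∈ P →
      ∃ D : ℝ, D ≤ 0 ∧ HasDerivWithinAt (fun s => V (x s)) D (Ici t) t) :
    ∀ t : ℝ, 0 ≤ t → x t ∈ P ∩ {y | V y < β} := by
  classical
  by_contra hcon
  push_neg at hcon
  set Bad : Set ℝ := {t | 0 ≤ t ∧ x t ∉ P ∩ {y | V y < β}} with hBad
  have hBadne : Bad.Nonempty := by
    obtain ⟨t, ht0, ht⟩ := hcon
    exact ⟨t, ht0, ht⟩
  have hBadbdd : BddBelow Bad := ⟨0, fun t ht => ht.1⟩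
  set t₀ := sInf Bad with ht₀def
  have ht₀0 : 0 ≤ t₀ := le_csInf hBadne fun t ht => ht.1
  -- all points of [0, t₀) are good
  have hgood : ∀ s, 0 ≤ s → s < t₀ → x s ∈ P ∩ {y | V y < β} := by
    intro s hs0 hst
    by_contra hbad
    exact absurd (csInf_le hBadbdd ⟨hs0, hbad⟩) (not_le.mpr hst)
  -- x t₀ ∈ P
  have hclosed : IsClosed P := hPc.isClosed
  have hxt₀P : x t₀ ∈ P := by
    rcases eq_or_lt_of_le ht₀0 with h0 | h0
    · rw [← h0]; exact hx0.1
    · have hne : (𝓝[Ico 0 t₀] t₀).NeBot := by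
        apply mem_closure_iff_nhdsWithin_neBot.mp
        rw [closure_Ico (ne_of_lt h0)]
        exact ⟨le_of_lt h0, le_refl _⟩
      have htend : Filter.Tendsto x (𝓝[Ico 0 t₀] t₀) (𝓝 (x t₀)) := by
        apply ((hx t₀ ht₀0).tendsto).mono_left
        exact nhdsWithin_mono _ (fun s hs => hs.1)
      exact hclosed.mem_of_tendsto htend
        (Filter.eventually_of_mem self_mem_nhdsWithin
          (fun s hs => (hgood s hs.1 hs.2).1))
  -- x s ∈ P for all s ∈ Icc 0 t₀
  have hPall : ∀ s ∈ Icc 0 t₀, x s ∈ P := by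
    intro s hs
    rcases eq_or_lt_of_le hs.2 with h | h
    · rw [h]; exact hxt₀P
    · exact (hgood s hs.1 h).1
  -- V (x t₀) < β via the fencing theorem on [0, t₀]
  have hVx : V (x t₀) < β := by
    have hD : ∀ s ∈ Ico (0:ℝ) t₀, ∃ D : ℝ, D ≤ 0 ∧
        HasDerivWithinAt (fun u => V (x u)) D (Ici s) s := by
      intro s hs
      exact hderiv s hs.1 (hPall s ⟨hs.1, le_of_lt hs.2⟩)
    choose! f' hf'le hf'deriv using hD
    have hcontf : ContinuousOn (fun u => V (x u)) (Icc 0 t₀) :=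
      hV.comp_continuousOn (hx.mono (fun s hs => hs.1))
    have key : ∀ ⦃s⦄, s ∈ Icc (0:ℝ) t₀ → V (x s) ≤ (fun _ => V (x 0)) s := by
      apply image_le_of_deriv_right_le_deriv_boundary hcontf
        (fun s hs => hf'deriv s hs) (le_refl _) continuousOn_const
        (fun s _ => hasDerivWithinAt_const s _ (V (x 0)))
      exact fun s hs => hf'le s hs
    calc V (x t₀) ≤ V (x 0) := key ⟨ht₀0, le_refl _⟩
      _ < β := hx0.2
  -- hence x t₀ ∈ interior P
  have hint : x t₀ ∈ interior P := by
    by_contra hni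
    have hfrx : x t₀ ∈ frontier P := by
      rw [hclosed.frontier_eq]
      exact ⟨hxt₀P, hni⟩
    exact absurd (hβ.2 ⟨x t₀, hfrx, rfl⟩) (not_le.mpr hVx)
  -- by continuity, trajectory is good on [t₀, u) for some u > t₀
  have hU : IsOpen (interior P ∩ V ⁻¹' Iio β) :=
    isOpen_interior.inter (isOpen_Iio.preimage hV)
  have hev : ∀ᶠ s in 𝓝[Ici t₀] t₀, x s ∈ interior P ∩ V ⁻¹' Iio β := by
    have := (hx t₀ ht₀0).tendsto
    have htend : Filter.Tendsto x (𝓝[Ici t₀] t₀) (𝓝 (x t₀)) :=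
      this.mono_left (nhdsWithin_mono _ (fun s hs => le_trans ht₀0 hs))
    exact htend.eventually (hU.mem_nhds ⟨hint, hVx⟩)
  rw [Filter.eventually_iff, mem_nhdsGE_iff_exists_Ico_subset] at hev
  obtain ⟨u, hu, hsub⟩ := hev
  have hu' : t₀ < u := hu
  obtain ⟨b, hbBad, hbu⟩ := exists_lt_of_csInf_lt hBadne hu'
  have hbt₀ : t₀ ≤ b := csInf_le hBadbdd hbBad
  have : x b ∈ interior P ∩ V ⁻¹' Iio β := hsub ⟨hbt₀, hbu⟩
  exact hbBad.2 ⟨interior_subset this.1, this.2⟩
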